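/- arXiv:2602.07712 — 4 statements merged into one kernel-verified Lean document; each statement's English description precedes it below -/
import Mathlib

section
/- Let (λ_i)_{i≥1} be a sequence in (0,1] and (w_i)_{i≥1} nonnegative reals with Σ_{i=1}^∞ w_i < ∞, and suppose the associated spectral measure has spectral dimension ω > 0 with constant c > 0. Then the excess loss F(k) := Σ_{i=1}^∞ w_i (1 − λ_i)^{2k} satisfies F(k) = O((log k / k)^ω) as k → ∞; that is, there exist a constant C > 0 and k_0 such that for all k ≥ k_0, F(k) ≤ C·(log k / k)^ω. (This is the scaling law L(θ_k) = L* + Õ(k^{−ω}) for gradient descent on an infinite-dimensional quadratic.) -/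
open Filter

/-- If the spectral measure `σ(0,u) = ∑_{i : λ i < u} w i` associated with
eigenvalues `λ i ∈ (0,1]` and summable nonnegative weights `w i` has spectral dimension
`ω > 0` with constant `c > 0` (i.e. `σ(0,u) / ((c/ω)·u^ω) → 1` as `u → 0⁺`), then the
excess loss `F(k) = ∑' i, w i (1 - λ i)^(2k)` satisfies `F(k) = O((log k / k)^ω)`:
there are `C > 0` and `k₀` with `F(k) ≤ C (log k / k)^ω` for all `k ≥ k₀`. -/
theorem excess_loss_scaling_law_infinite_dim
    (lam w : ℕ → ℝ)
    (hlam : ∀ i, lam i ∈ Set.Ioc (0 : ℝ) 1)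
    (hw : ∀ i, 0 ≤ w i) (hsum : Summable w)
    (ω c : ℝ) (hω : 0 < ω) (hc : 0 < c)
    (hdim : Tendsto
      (fun u : ℝ => (∑' i : {i : ℕ // lam i < u}, w i) / ((c / ω) * u ^ ω))
      (nhdsWithin 0 (Set.Ioi 0)) (nhds 1)) :
    ∃ C > (0 : ℝ), ∃ k₀ : ℕ, ∀ k : ℕ, k₀ ≤ k →
      (∑' i : ℕ, w i * (1 - lam i) ^ (2 * k)) ≤ C * (Real.log k / k) ^ ω := by
  have hWnn : (0:ℝ) ≤ ∑' i, w i := tsum_nonneg hw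
  have hslope : 0 < c / ω := div_pos hc hω
  -- Step 1: eventually `σ(0,u) ≤ 2 (c/ω) u^ω` for small positive u
  have h2 : ∀ᶠ u in nhdsWithin (0:ℝ) (Set.Ioi 0),
      (∑' i : {i : ℕ // lam i < u}, w i) ≤ 2 * ((c / ω) * u ^ ω) := by
    filter_upwards [hdim.eventually_lt_const (by norm_num : (1:ℝ) < 2),
      self_mem_nhdsWithin] with u hu hu0
    have hden : 0 < (c / ω) * u ^ ω :=
      mul_pos hslope (Real.rpow_pos_of_pos hu0 ω)
    have := (div_lt_iff₀ hden).mp hu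
    linarith
  -- Step 2: `u_k := ω * (log k / k)` tends to `0⁺`
  have hlog0 : Tendsto (fun k : ℕ => Real.log k / k) atTop (nhds 0) := by
    have h1 : Tendsto (fun x : ℝ => Real.log x / x) atTop (nhds 0) := by
      simpa using Real.isLittleO_log_id_atTop.tendsto_div_nhds_zero
    exact h1.comp tendsto_natCast_atTop_atTop
  have hg : Tendsto (fun k : ℕ => ω * (Real.log k / k)) atTop
      (nhdsWithin 0 (Set.Ioi 0)) := by
    rw [tendsto_nhdsWithin_iff]
    constructor
    · simpa using hlog0.const_mul ω
    · filter_upwards [eventually_ge_atTop 2] with k hk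
      have hk1 : (1:ℝ) < (k:ℝ) := by exact_mod_cast hk.trans_lt' one_lt_two
      have : 0 < Real.log k := Real.log_pos hk1
      have hk0 : (0:ℝ) < k := by linarith
      exact mul_pos hω (div_pos this hk0)
  obtain ⟨N, hN⟩ := eventually_atTop.mp (hg.eventually h2)
  refine ⟨2 * (c / ω) * ω ^ ω + (∑' i, w i) + 1, by positivity, max N 3, ?_⟩
  intro k hk
  have hkN : N ≤ k := le_trans (le_max_left _ _) hk
  have hk3 : 3 ≤ k := le_trans (le_max_right _ _) hk
  have hkR : (3:ℝ) ≤ (k:ℝ) := by exact_mod_cast hk3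
  have hk0 : (0:ℝ) < (k:ℝ) := by linarith
  have hlogk : 1 ≤ Real.log k := by
    rw [Real.le_log_iff_exp_le hk0]
    have := Real.exp_one_lt_d9
    linarith
  have hlk0 : 0 < Real.log k / k := div_pos (by linarith) hk0
  set u : ℝ := ω * (Real.log k / k) with hu_def
  have hu0 : 0 < u := mul_pos hω hlk0
  have hσ : (∑' i : {i : ℕ // lam i < u}, w i) ≤ 2 * ((c / ω) * u ^ ω) := hN k hkN
  -- the summand
  set f : ℕ → ℝ := fun i => w i * (1 - lam i) ^ (2 * k) with hf_def
  have h1nn : ∀ i, 0 ≤ 1 - lam i := fun i => by have := (hlam i).2; linarith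
  have hfnn : ∀ i, 0 ≤ f i := fun i => mul_nonneg (hw i) (pow_nonneg (h1nn i) _)
  have hfle : ∀ i, f i ≤ w i := by
    intro i
    have h1 : (1 - lam i) ^ (2 * k) ≤ 1 :=
      pow_le_one₀ (h1nn i) (by have := (hlam i).1; linarith)
    calc f i ≤ w i * 1 := mul_le_mul_of_nonneg_left h1 (hw i)
    _ = w i := mul_one _
  have hfs : Summable f := hsum.of_nonneg_of_le hfnn hfle
  set s : Set ℕ := {i | lam i < u} with hs_def
  have hsplit : (∑' i, f i) = (∑' i : s, f i) + ∑' i : ↥sᶜ, f i :=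
    (Summable.tsum_subtype_add_tsum_subtype_compl hfs s).symm
  -- first part
  have hS1 : (∑' i : s, f i) ≤ 2 * ((c / ω) * u ^ ω) := by
    refine le_trans (Summable.tsum_le_tsum (fun i => hfle i) (hfs.subtype s) (hsum.subtype s)) ?_
    exact hσ
  -- second part
  set B : ℝ := Real.exp (-(2 * (k:ℝ)) * u) with hB_def
  have hBnn : 0 ≤ B := Real.exp_nonneg _
  have hS2 : (∑' i : ↥sᶜ, f i) ≤ (∑' i, w i) * B := by
    have hbound : ∀ i : ↥sᶜ, f i ≤ w (i:ℕ) * B := by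
      rintro ⟨i, hi⟩
      have hui : u ≤ lam i := not_lt.mp hi
      have h1 : (1 - lam i) ^ (2 * k) ≤ Real.exp (-lam i) ^ (2 * k) :=
        pow_le_pow_left₀ (h1nn i) (by have := Real.add_one_le_exp (-lam i); linarith) _
      have h2' : Real.exp (-lam i) ^ (2 * k) = Real.exp (((2 * k : ℕ) : ℝ) * (-lam i)) :=
        (Real.exp_nat_mul _ _).symm
      have h3 : Real.exp (((2 * k : ℕ) : ℝ) * (-lam i)) ≤ B := by
        rw [hB_def]
        apply Real.exp_le_exp.mpr
        push_cast
        nlinarith [hu0]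
      have : (1 - lam i) ^ (2 * k) ≤ B := by
        rw [h2'] at h1; exact h1.trans h3
      exact mul_le_mul_of_nonneg_left this (hw i)
    calc (∑' i : ↥sᶜ, f i) ≤ ∑' i : ↥sᶜ, w (i:ℕ) * B :=
          Summable.tsum_le_tsum hbound (hfs.subtype _) ((hsum.subtype _).mul_right B)
      _ = (∑' i : ↥sᶜ, w (i:ℕ)) * B := tsum_mul_right
      _ ≤ (∑' i, w i) * B := by
          apply mul_le_mul_of_nonneg_right _ hBnn
          exact Summable.tsum_subtype_le w _ hw hsum
  -- B ≤ (log k / k)^ω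
  have hBval : B = (k:ℝ) ^ (-(2 * ω)) := by
    rw [hB_def, Real.rpow_def_of_pos hk0]
    congr 1
    rw [hu_def]
    field_simp
  have hBle : B ≤ (Real.log k / k) ^ ω := by
    rw [hBval]
    have h1 : (k:ℝ) ^ (-(2 * ω)) ≤ (k:ℝ) ^ (-ω) :=
      Real.rpow_le_rpow_of_exponent_le (by linarith) (by linarith)
    have h2' : (k:ℝ) ^ (-ω) = ((k:ℝ)⁻¹) ^ ω := by
      rw [Real.inv_rpow hk0.le, Real.rpow_neg hk0.le]
    have h3 : ((k:ℝ)⁻¹) ^ ω ≤ (Real.log k / k) ^ ω := by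
      apply Real.rpow_le_rpow (by positivity) _ hω.le
      rw [inv_eq_one_div]
      gcongr
    calc (k:ℝ) ^ (-(2 * ω)) ≤ (k:ℝ) ^ (-ω) := h1
      _ = ((k:ℝ)⁻¹) ^ ω := h2'
      _ ≤ (Real.log k / k) ^ ω := h3
  -- u^ω = ω^ω * (log k/k)^ω
  have huω : u ^ ω = ω ^ ω * (Real.log k / k) ^ ω := by
    rw [hu_def, Real.mul_rpow hω.le hlk0.le]
  have hLnn : 0 ≤ (Real.log k / k) ^ ω := Real.rpow_nonneg hlk0.le _
  calc (∑' i, f i) = (∑' i : s, f i) + ∑' i : ↥sᶜ, f i := hsplit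
    _ ≤ 2 * ((c / ω) * u ^ ω) + (∑' i, w i) * B := add_le_add hS1 hS2
    _ ≤ 2 * (c / ω) * ω ^ ω * (Real.log k / k) ^ ω
        + (∑' i, w i) * (Real.log k / k) ^ ω := by
        rw [huω]
        have := mul_le_mul_of_nonneg_left hBle hWnn
        linarith [this]
    _ ≤ (2 * (c / ω) * ω ^ ω + (∑' i, w i) + 1) * (Real.log k / k) ^ ω := by
        nlinarith [hLnn]
end

section
/- Let (λ_i)_{i≥1} be a strictly decreasing sequence in (0,1] converging to 0, and (w_i)_{i≥1} nonnegative reals with Σ_{i=1}^∞ w_i < ∞, such that the associated spectral measure has spectral dimension ω > 0 with constant c > 0. Then (Phase 1 of the theoretical scaling law): (i) the approximation error satisfies E_approx(d) = Σ_{i>d} w_i ∼ (c/ω)·λ_d^ω as d → ∞, and (ii) there exist C > 0 and k_0 such that for all pairs (k, d) with k ≥ k_0 and k·λ_d ≤ 1, the optimization error satisfies E_opt(k,d) := Σ_{i=1}^d w_i (1 − λ_i)^{2k} ≤ C·(log k / k)^ω. -/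
open Filter

/-- **Phase 1 of the theoretical scaling law.** For strictly decreasing
eigenvalues `λ i ∈ (0,1]` tending to `0` and summable nonnegative weights `w i` whose
spectral measure `σ(0,u) = ∑_{i : λ i < u} w i` has spectral dimension `ω > 0` with
constant `c > 0`:
(i) the approximation error satisfies `∑_{i > d} w i ∼ (c/ω) · (λ d)^ω` as `d → ∞`, and
(ii) there exist `C > 0` and `k₀` such that for all `(k, d)` with `k ≥ k₀` and
`k · λ d ≤ 1`, the optimization error satisfies
`∑_{i ≤ d} w i (1 - λ i)^(2k) ≤ C · (log k / k)^ω`. -/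
theorem phase_one_scaling_law
    (lam w : ℕ → ℝ)
    (hlam : ∀ i, lam i ∈ Set.Ioc (0 : ℝ) 1) (hdec : StrictAnti lam)
    (hlam0 : Tendsto lam atTop (nhds 0))
    (hw : ∀ i, 0 ≤ w i) (hsum : Summable w)
    (ω c : ℝ) (hω : 0 < ω) (hc : 0 < c)
    (hdim : Tendsto
      (fun u : ℝ => (∑' i : {i : ℕ // lam i < u}, w i) / ((c / ω) * u ^ ω))
      (nhdsWithin 0 (Set.Ioi 0)) (nhds 1)) :
    (Tendsto
        (fun d : ℕ => (∑' i : {i : ℕ // d < i}, w i) / ((c / ω) * lam d ^ ω))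
        atTop (nhds 1)) ∧
      ∃ C > (0 : ℝ), ∃ k₀ : ℕ, ∀ k d : ℕ, k₀ ≤ k → (k : ℝ) * lam d ≤ 1 →
        (∑ i ∈ Finset.Iic d, w i * (1 - lam i) ^ (2 * k)) ≤
          C * (Real.log k / k) ^ ω := by
  constructor
  · -- Part (i)
    have hlt : Tendsto lam atTop (nhdsWithin 0 (Set.Ioi 0)) :=
      tendsto_nhdsWithin_of_tendsto_nhds_of_eventually_within _ hlam0
        (Eventually.of_forall fun d => (hlam d).1)
    refine (hdim.comp hlt).congr fun d => ?_
    have hset : {i : ℕ | lam i < lam d} = {i : ℕ | d < i} :=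
      Set.ext fun i => hdec.lt_iff_gt
    simp only [Function.comp_apply]
    congr 1
    calc (∑' i : {i : ℕ // lam i < lam d}, w i)
        = ∑' i, ({i : ℕ | lam i < lam d}).indicator w i := tsum_subtype _ _
      _ = ∑' i, ({i : ℕ | d < i}).indicator w i := by rw [hset]
      _ = ∑' i : {i : ℕ // d < i}, w i := (tsum_subtype _ _).symm
  · -- Part (ii)
    set S := ∑' i, w i with hSdef
    have hS0 : 0 ≤ S := tsum_nonneg hw
    have h2 : ∀ᶠ u in nhdsWithin 0 (Set.Ioi 0),
        (∑' i : {i : ℕ // lam i < u}, w i) / ((c / ω) * u ^ ω) ≤ 2 :=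
      hdim.eventually (eventually_le_nhds (by norm_num))
    rw [eventually_nhdsWithin_iff, Metric.eventually_nhds_iff] at h2
    obtain ⟨ε, hε, hεb⟩ := h2
    have hto : Tendsto (fun k : ℕ => ω * (Real.log k / k)) atTop (nhds 0) := by
      have h1 : Tendsto (fun x : ℝ => Real.log x / x) atTop (nhds 0) := by
        simpa using Real.tendsto_pow_log_div_mul_add_atTop 1 0 1 one_ne_zero
      simpa using (h1.comp tendsto_natCast_atTop_atTop).const_mul ω
    have hev : ∀ᶠ k : ℕ in atTop, ω * (Real.log k / k) < ε :=
      hto.eventually (eventually_lt_nhds hε)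
    obtain ⟨N, hN⟩ := eventually_atTop.1 hev
    have hωω : (0:ℝ) < ω ^ ω := Real.rpow_pos_of_pos hω ω
    refine ⟨2 * (c / ω) * ω ^ ω + S,
      add_pos_of_pos_of_nonneg (by positivity) hS0, max N 3, fun k d hk _ => ?_⟩
    have hk3 : 3 ≤ k := le_trans (le_max_right _ _) hk
    have hkN : N ≤ k := le_trans (le_max_left _ _) hk
    have kpos : (0:ℝ) < k := by exact_mod_cast lt_of_lt_of_le (by norm_num) hk3
    have klog : (1:ℝ) ≤ Real.log k := by
      rw [Real.le_log_iff_exp_le kpos]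
      calc Real.exp 1 ≤ 2.7182818286 := Real.exp_one_lt_d9.le
        _ ≤ 3 := by norm_num
        _ ≤ k := by exact_mod_cast hk3
    set t := ω * (Real.log k / k) with ht
    have tpos : 0 < t := by
      have : 0 < Real.log k / k := div_pos (by linarith) kpos
      positivity
    have tε : t < ε := hN k hkN
    set q := (Real.log k / k) ^ ω with hq
    have hq0 : 0 ≤ q := Real.rpow_nonneg (div_nonneg (by linarith) kpos.le) ω
    -- σ(0,t) ≤ 2 (c/ω) t^ω
    have hσ : (∑' i : {i : ℕ // lam i < t}, w i) ≤ 2 * ((c / ω) * t ^ ω) := by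
      have hd : dist t 0 < ε := by
        rw [Real.dist_eq, sub_zero, abs_of_pos tpos]; exact tε
      have := hεb hd tpos
      have hden : 0 < (c / ω) * t ^ ω :=
        mul_pos (div_pos hc hω) (Real.rpow_pos_of_pos tpos ω)
      calc (∑' i : {i : ℕ // lam i < t}, w i)
          = (∑' i : {i : ℕ // lam i < t}, w i) / ((c / ω) * t ^ ω) * ((c / ω) * t ^ ω) := by
            field_simp
        _ ≤ 2 * ((c / ω) * t ^ ω) := by
            exact mul_le_mul_of_nonneg_right this hden.le
    have htω : t ^ ω = ω ^ ω * q := by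
      rw [ht, hq, Real.mul_rpow hω.le (div_nonneg (by linarith) kpos.le)]
    -- split the sum
    rw [← Finset.sum_filter_add_sum_filter_not (Finset.Iic d) (fun i => lam i < t)]
    have boundA : (∑ i ∈ (Finset.Iic d).filter (fun i => lam i < t),
        w i * (1 - lam i) ^ (2 * k)) ≤ 2 * (c / ω) * ω ^ ω * q := by
      have step1 : (∑ i ∈ (Finset.Iic d).filter (fun i => lam i < t),
          w i * (1 - lam i) ^ (2 * k)) ≤
          ∑ i ∈ (Finset.Iic d).filter (fun i => lam i < t), w i := by
        refine Finset.sum_le_sum fun i _ => ?_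
        refine mul_le_of_le_one_right (hw i) ?_
        refine pow_le_one₀ (by linarith [(hlam i).1, (hlam i).2]) (by linarith [(hlam i).1])
      have step2 : (∑ i ∈ (Finset.Iic d).filter (fun i => lam i < t), w i) ≤
          ∑' i : {i : ℕ // lam i < t}, w i := by
        calc (∑ i ∈ (Finset.Iic d).filter (fun i => lam i < t), w i)
            = ∑ i ∈ (Finset.Iic d).filter (fun i => lam i < t),
                ({i : ℕ | lam i < t}).indicator w i := by
              refine Finset.sum_congr rfl fun i hi => ?_
              have hmem : i ∈ {j : ℕ | lam j < t} := (Finset.mem_filter.1 hi).2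
              exact (Set.indicator_of_mem hmem w).symm
          _ ≤ ∑' i, ({i : ℕ | lam i < t}).indicator w i :=
              Summable.sum_le_tsum _ (fun i _ => Set.indicator_nonneg (fun j _ => hw j) i)
                (hsum.indicator _)
          _ = ∑' i : {i : ℕ // lam i < t}, w i := (tsum_subtype _ _).symm
      calc (∑ i ∈ (Finset.Iic d).filter (fun i => lam i < t),
          w i * (1 - lam i) ^ (2 * k)) ≤ ∑' i : {i : ℕ // lam i < t}, w i :=
            step1.trans step2
        _ ≤ 2 * ((c / ω) * t ^ ω) := hσ
        _ = 2 * (c / ω) * ω ^ ω * q := by rw [htω]; ring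
    have boundB : (∑ i ∈ (Finset.Iic d).filter (fun i => ¬ lam i < t),
        w i * (1 - lam i) ^ (2 * k)) ≤ S * q := by
      have key : ∀ i, t ≤ lam i → (1 - lam i) ^ (2 * k) ≤ q := by
        intro i hi
        have h1 : (1 - lam i) ^ (2 * k) ≤ Real.exp (-lam i) ^ (2 * k) := by
          refine pow_le_pow_left₀ (by linarith [(hlam i).2]) ?_ _
          linarith [Real.add_one_le_exp (-lam i)]
        have h2' : Real.exp (-lam i) ^ (2 * k) = Real.exp (((2 * k : ℕ) : ℝ) * (-lam i)) :=
          (Real.exp_nat_mul _ _).symm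
        have h3 : Real.exp (((2 * k : ℕ) : ℝ) * (-lam i)) ≤
            Real.exp (((2 * k : ℕ) : ℝ) * (-t)) := by
          apply Real.exp_le_exp.2
          apply mul_le_mul_of_nonneg_left (by linarith) (by positivity)
        have h4 : ((2 * k : ℕ) : ℝ) * (-t) = Real.log k * (-(2 * ω)) := by
          rw [ht]; push_cast; field_simp
        have h5 : Real.exp (Real.log k * (-(2 * ω))) = (k : ℝ) ^ (-(2 * ω)) :=
          (Real.rpow_def_of_pos kpos _).symm
        have h6 : (k : ℝ) ^ (-(2 * ω)) = ((k : ℝ) ^ (-2 : ℝ)) ^ ω := by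
          rw [← Real.rpow_mul kpos.le]
          congr 1
          ring
        have h7 : (k : ℝ) ^ (-2 : ℝ) ≤ Real.log k / k := by
          have hkk : (k : ℝ) ^ (-2 : ℝ) = ((k : ℝ) ^ (2 : ℕ))⁻¹ := by
            rw [show (-2 : ℝ) = -((2 : ℕ) : ℝ) by norm_num, Real.rpow_neg kpos.le,
              Real.rpow_natCast]
          have h1k : (1 : ℝ) / k ≤ Real.log k := by
            refine le_trans ?_ klog
            rw [div_le_one kpos]
            exact_mod_cast le_trans (by norm_num) hk3
          rw [hkk]
          calc ((k : ℝ) ^ (2 : ℕ))⁻¹ = (1 / (k : ℝ)) / k := by ring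
            _ ≤ Real.log k / k := by gcongr
        have h8 : ((k : ℝ) ^ (-2 : ℝ)) ^ ω ≤ q := by
          rw [hq]
          exact Real.rpow_le_rpow (Real.rpow_nonneg kpos.le _) h7 hω.le
        calc (1 - lam i) ^ (2 * k) ≤ Real.exp (-lam i) ^ (2 * k) := h1
          _ = Real.exp (((2 * k : ℕ) : ℝ) * (-lam i)) := h2'
          _ ≤ Real.exp (((2 * k : ℕ) : ℝ) * (-t)) := h3
          _ = (k : ℝ) ^ (-(2 * ω)) := by rw [h4, h5]
          _ = ((k : ℝ) ^ (-2 : ℝ)) ^ ω := h6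
          _ ≤ q := h8
      calc (∑ i ∈ (Finset.Iic d).filter (fun i => ¬ lam i < t),
          w i * (1 - lam i) ^ (2 * k))
          ≤ ∑ i ∈ (Finset.Iic d).filter (fun i => ¬ lam i < t), w i * q := by
            refine Finset.sum_le_sum fun i hi => ?_
            exact mul_le_mul_of_nonneg_left
              (key i (not_lt.1 (Finset.mem_filter.1 hi).2)) (hw i)
        _ = (∑ i ∈ (Finset.Iic d).filter (fun i => ¬ lam i < t), w i) * q :=
            (Finset.sum_mul _ _ _).symm
        _ ≤ S * q := mul_le_mul_of_nonneg_right
            (Summable.sum_le_tsum _ (fun i _ => hw i) hsum) hq0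
    calc (∑ i ∈ (Finset.Iic d).filter (fun i => lam i < t),
            w i * (1 - lam i) ^ (2 * k)) +
          ∑ i ∈ (Finset.Iic d).filter (fun i => ¬ lam i < t),
            w i * (1 - lam i) ^ (2 * k)
        ≤ 2 * (c / ω) * ω ^ ω * q + S * q := add_le_add boundA boundB
      _ = (2 * (c / ω) * ω ^ ω + S) * q := by ring
end

section
/- Let γ, L, Δ > 0 with γL ∈ (0,1], and let α, β > 0 with α + β > 1. Define λ_i = γL·i^{−α} and w_i = (L·Δ²/2)·i^{−(α+β)} for i ≥ 1, and set ω := 1 + (β−1)/α and c := L·Δ² / (2α·(γL)^ω). Then the associated spectral measure has spectral dimension ω with constant c; that is, σ(0,u) := Σ_{i : λ_i < u} w_i satisfies σ(0,u) / ((c/ω)·u^ω) → 1 as u → 0+. -/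
open Filter Real

private lemma pds_mvt {p a : ℝ} (hp : 1 < p) (ha : 0 < a) :
    (p - 1) * (a + 1) ^ (-p) ≤ a ^ (1 - p) - (a + 1) ^ (1 - p) ∧
      a ^ (1 - p) - (a + 1) ^ (1 - p) ≤ (p - 1) * a ^ (-p) := by
  have h01 : a < a + 1 := by linarith
  obtain ⟨ξ, hξ, hslope⟩ := exists_hasDerivAt_eq_slope (fun x => x ^ (1 - p))
      (fun x => (1 - p) * x ^ (-p)) h01
      (by
        apply ContinuousOn.rpow_const continuousOn_id
        intro x hx
        exact Or.inl (ne_of_gt (lt_of_lt_of_le ha hx.1)))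
      (by
        intro x hx
        have hx0 : x ≠ 0 := ne_of_gt (lt_trans ha hx.1)
        have h := Real.hasDerivAt_rpow_const (x := x) (p := 1 - p) (Or.inl hx0)
        have he : 1 - p - 1 = -p := by ring
        rwa [he] at h)
  have hξ0 : 0 < ξ := lt_trans ha hξ.1
  have hkey : a ^ (1 - p) - (a + 1) ^ (1 - p) = (p - 1) * ξ ^ (-p) := by
    have h1 : a + 1 - a = 1 := by ring
    rw [h1, div_one] at hslope
    nlinarith [hslope]
  constructor
  · rw [hkey]
    have : (a + 1) ^ (-p) ≤ ξ ^ (-p) :=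
      Real.rpow_le_rpow_of_nonpos hξ0 hξ.2.le (by linarith)
    nlinarith
  · rw [hkey]
    have : ξ ^ (-p) ≤ a ^ (-p) :=
      Real.rpow_le_rpow_of_nonpos ha hξ.1.le (by linarith)
    nlinarith

private lemma pds_telescope {p a : ℝ} (hp : 1 < p) (ha : 0 < a) :
    HasSum (fun k : ℕ => (a + k) ^ (1 - p) - (a + k + 1) ^ (1 - p)) (a ^ (1 - p)) := by
  have hpos : ∀ k : ℕ, (0:ℝ) < a + k := fun k => by positivity
  have hnn : ∀ k : ℕ, 0 ≤ (a + k) ^ (1 - p) - (a + k + 1) ^ (1 - p) := fun k =>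
    sub_nonneg.2 (Real.rpow_le_rpow_of_nonpos (hpos k) (by linarith) (by linarith))
  rw [hasSum_iff_tendsto_nat_of_nonneg hnn]
  have key : ∀ n : ℕ, ∑ k ∈ Finset.range n, ((a + k) ^ (1 - p) - (a + k + 1) ^ (1 - p))
      = a ^ (1 - p) - (a + n) ^ (1 - p) := by
    intro n
    have h := Finset.sum_range_sub' (fun k : ℕ => (a + k) ^ (1 - p)) n
    push_cast at h
    simpa [add_assoc] using h
  simp only [key]
  have h1 : Tendsto (fun n : ℕ => (a + n : ℝ)) atTop atTop :=
    tendsto_atTop_add_const_left _ a tendsto_natCast_atTop_atTop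
  have h2 : Tendsto (fun n : ℕ => (a + n : ℝ) ^ (1 - p)) atTop (nhds 0) := by
    have h3 := (tendsto_rpow_neg_atTop (by linarith : (0:ℝ) < p - 1)).comp h1
    refine h3.congr fun n => ?_
    simp only [Function.comp]
    congr 1
    ring
  simpa using (tendsto_const_nhds (x := a ^ (1 - p))).sub h2

private def pds_equiv (P : ℕ → Prop) (N : ℕ) (h : ∀ i, P i ↔ N + 1 ≤ i) :
    ℕ ≃ {i : ℕ // P i} where
  toFun k := ⟨N + 1 + k, (h _).2 (by omega)⟩
  invFun i := i.1 - (N + 1)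
  left_inv k := by simp
  right_inv i := by
    have := (h i.1).1 i.2
    ext
    simp only
    omega

private lemma pds_equiv_coe (P : ℕ → Prop) (N : ℕ) (h : ∀ i, P i ↔ N + 1 ≤ i) (k : ℕ) :
    ((pds_equiv P N h k : {i : ℕ // P i}) : ℕ) = N + 1 + k := rfl

private lemma pds_tail_bounds {p a : ℝ} (hp : 1 < p) (ha : 1 ≤ a) :
    Summable (fun k : ℕ => (a + k + 1) ^ (-p)) ∧
      (a + 1) ^ (1 - p) / (p - 1) ≤ (∑' k : ℕ, (a + k + 1) ^ (-p)) ∧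
      (∑' k : ℕ, (a + k + 1) ^ (-p)) ≤ a ^ (1 - p) / (p - 1) := by
  have ha0 : (0:ℝ) < a := by linarith
  have hp1 : (0:ℝ) < p - 1 := by linarith
  have hub : ∀ k : ℕ, (a + k + 1) ^ (-p) ≤
      ((a + k) ^ (1 - p) - (a + k + 1) ^ (1 - p)) / (p - 1) := by
    intro k
    have h := (pds_mvt hp (show (0:ℝ) < a + k by positivity)).1
    rw [le_div_iff₀ hp1]
    nlinarith
  have hS := pds_telescope hp ha0
  have hSummG : Summable fun k : ℕ =>
      ((a + k) ^ (1 - p) - (a + k + 1) ^ (1 - p)) / (p - 1) := hS.summable.div_const _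
  have hsum : Summable (fun k : ℕ => (a + k + 1) ^ (-p)) :=
    Summable.of_nonneg_of_le (fun k => by positivity) hub hSummG
  refine ⟨hsum, ?_, ?_⟩
  · have hS' := pds_telescope hp (show (0:ℝ) < a + 1 by linarith)
    have hlb : ∀ k : ℕ, (a + 1 + k) ^ (1 - p) - (a + 1 + k + 1) ^ (1 - p) ≤
        (p - 1) * (a + k + 1) ^ (-p) := by
      intro k
      have h := (pds_mvt hp (show (0:ℝ) < a + k + 1 by positivity)).2
      have e1 : a + 1 + (k:ℝ) = a + k + 1 := by ring
      rw [e1]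
      exact h
    have hlb' : ∀ k : ℕ, ((a + 1 + k) ^ (1 - p) - (a + 1 + k + 1) ^ (1 - p)) / (p - 1) ≤
        (a + k + 1) ^ (-p) := by
      intro k
      rw [div_le_iff₀ hp1]
      nlinarith [hlb k]
    calc (a + 1) ^ (1 - p) / (p - 1)
        = ∑' k : ℕ, ((a + 1 + k) ^ (1 - p) - (a + 1 + k + 1) ^ (1 - p)) / (p - 1) :=
          (hS'.div_const _).tsum_eq.symm
      _ ≤ ∑' k : ℕ, (a + k + 1) ^ (-p) :=
          (hS'.summable.div_const _).tsum_le_tsum hlb' hsum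
  · calc (∑' k : ℕ, (a + k + 1) ^ (-p))
        ≤ ∑' k : ℕ, ((a + k) ^ (1 - p) - (a + k + 1) ^ (1 - p)) / (p - 1) :=
          hsum.tsum_le_tsum hub hSummG
      _ = a ^ (1 - p) / (p - 1) := (hS.div_const _).tsum_eq

/-- Under the power-decay (source/capacity) conditions
`λ i = γL · i^(-α)` and `w i = (LΔ²/2) · i^(-(α+β))` for `i ≥ 1`, with `γL ∈ (0,1]`,
`α, β > 0`, `α + β > 1`, the associated spectral measure
`σ(0,u) = ∑_{i ≥ 1 : λ i < u} w i` has spectral dimension `ω = 1 + (β-1)/α` with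
constant `c = LΔ² / (2α(γL)^ω)`; i.e. `σ(0,u) / ((c/ω)·u^ω) → 1` as `u → 0⁺`. -/
theorem power_decay_spectral_dimension
    (γ L Δ α β : ℝ)
    (hγ : 0 < γ) (hL : 0 < L) (hΔ : 0 < Δ)
    (hγL : γ * L ∈ Set.Ioc (0 : ℝ) 1)
    (hα : 0 < α) (hβ : 0 < β) (hαβ : 1 < α + β)
    (lam w : ℕ → ℝ)
    (hlam : ∀ i : ℕ, 1 ≤ i → lam i = γ * L * (i : ℝ) ^ (-α))
    (hw : ∀ i : ℕ, 1 ≤ i → w i = (L * Δ ^ 2 / 2) * (i : ℝ) ^ (-(α + β)))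
    (ω c : ℝ)
    (hω : ω = 1 + (β - 1) / α)
    (hc : c = L * Δ ^ 2 / (2 * α * (γ * L) ^ ω)) :
    Tendsto
      (fun u : ℝ =>
        (∑' i : {i : ℕ // 1 ≤ i ∧ lam i < u}, w i) / ((c / ω) * u ^ ω))
      (nhdsWithin 0 (Set.Ioi 0)) (nhds 1) := by
  obtain ⟨hγL0, hγL1⟩ := hγL
  set p := α + β with hpdef
  have hp : 1 < p := hαβ
  have hp1 : (0:ℝ) < p - 1 := by linarith
  have hαω : α * ω = p - 1 := by
    rw [hω]; field_simp; ring
  have hω0 : 0 < ω := by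
    have h2 : ω = (p - 1) / α := by
      field_simp [← hαω]
      linarith [mul_comm α ω]
    rw [h2]; positivity
  set t : ℝ → ℝ := fun u => (γ * L / u) ^ α⁻¹ with htdef
  have ht : Tendsto t (nhdsWithin 0 (Set.Ioi 0)) atTop := by
    have h1 : Tendsto (fun u : ℝ => γ * L / u) (nhdsWithin 0 (Set.Ioi 0)) atTop := by
      have h2 := (tendsto_inv_nhdsGT_zero (𝕜 := ℝ)).const_mul_atTop hγL0
      simpa [div_eq_mul_inv] using h2
    exact (tendsto_rpow_atTop (by positivity : (0:ℝ) < α⁻¹)).comp h1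
  have hhi : Tendsto (fun u => ((⌊t u⌋₊ : ℝ) / t u) ^ (1 - p))
      (nhdsWithin 0 (Set.Ioi 0)) (nhds 1) := by
    have h1 := (tendsto_nat_floor_div_atTop (R := ℝ)).comp ht
    have h2 := h1.rpow_const (p := 1 - p) (Or.inl one_ne_zero)
    simpa using h2
  have hlo : Tendsto (fun u => (((⌊t u⌋₊ : ℝ) + 1) / t u) ^ (1 - p))
      (nhdsWithin 0 (Set.Ioi 0)) (nhds 1) := by
    have hbase : Tendsto (fun x : ℝ => ((⌊x⌋₊ : ℝ) + 1) / x) atTop (nhds 1) := by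
      have h1 := (tendsto_nat_floor_div_atTop (R := ℝ)).add
        (tendsto_inv_atTop_zero (𝕜 := ℝ))
      simp only [add_zero] at h1
      refine h1.congr fun x => ?_
      rw [add_div, one_div]
    have h2 := (hbase.comp ht).rpow_const (p := 1 - p) (Or.inl one_ne_zero)
    simpa using h2
  have key : ∀ u ∈ Set.Ioo (0:ℝ) (γ * L),
      (((⌊t u⌋₊ : ℝ) + 1) / t u) ^ (1 - p) ≤
        (∑' i : {i : ℕ // 1 ≤ i ∧ lam i < u}, w i) / ((c / ω) * u ^ ω) ∧
      (∑' i : {i : ℕ // 1 ≤ i ∧ lam i < u}, w i) / ((c / ω) * u ^ ω) ≤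
        ((⌊t u⌋₊ : ℝ) / t u) ^ (1 - p) := by
    rintro u ⟨hu0, huγ⟩
    have hdiv0 : 0 < γ * L / u := div_pos hγL0 hu0
    have htu0 : 0 < t u := Real.rpow_pos_of_pos hdiv0 _
    have htu1 : 1 < t u := by
      refine (Real.one_lt_rpow_iff_of_pos hdiv0).2 (Or.inl ⟨?_, by positivity⟩)
      exact (one_lt_div hu0).2 huγ
    set N := ⌊t u⌋₊ with hNdef
    have hN1 : 1 ≤ N := Nat.le_floor (by exact_mod_cast htu1.le)
    have hNr : (1:ℝ) ≤ (N:ℝ) := by exact_mod_cast hN1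
    have htα : (t u) ^ α = γ * L / u := Real.rpow_inv_rpow hdiv0.le hα.ne'
    have hlamlt : ∀ i : ℕ, 1 ≤ i → (lam i < u ↔ t u < (i:ℝ)) := by
      intro i hi1
      have hipos : (0:ℝ) < i := by exact_mod_cast hi1
      have hpow : (0:ℝ) < (i:ℝ) ^ α := Real.rpow_pos_of_pos hipos _
      have h1 : lam i < u ↔ γ * L / u < (i:ℝ) ^ α := by
        rw [hlam i hi1, Real.rpow_neg hipos.le, ← div_eq_mul_inv,
          div_lt_iff₀ hpow, div_lt_iff₀ hu0, mul_comm u]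
      have h2 : t u < (i:ℝ) ↔ γ * L / u < (i:ℝ) ^ α := by
        rw [← Real.rpow_lt_rpow_iff htu0.le hipos.le hα, htα]
      rw [h1, h2]
    have hmem : ∀ i : ℕ, (1 ≤ i ∧ lam i < u) ↔ N + 1 ≤ i := by
      intro i
      constructor
      · rintro ⟨hi1, h⟩
        have h2 := (hlamlt i hi1).1 h
        have hfl : N < i := (Nat.floor_lt htu0.le).2 h2
        omega
      · intro h
        have hi1 : 1 ≤ i := by omega
        refine ⟨hi1, (hlamlt i hi1).2 ?_⟩
        have h2 : t u < (N:ℝ) + 1 := Nat.lt_floor_add_one (t u)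
        have h3 : ((N:ℝ) + 1) ≤ (i:ℝ) := by exact_mod_cast h
        linarith
    have hσ : (∑' i : {i : ℕ // 1 ≤ i ∧ lam i < u}, w i)
        = (L * Δ ^ 2 / 2) * ∑' k : ℕ, ((N:ℝ) + k + 1) ^ (-p) := by
      rw [← (pds_equiv _ N hmem).tsum_eq]
      have hterm : ∀ k : ℕ, w ((pds_equiv _ N hmem k : {i : ℕ // 1 ≤ i ∧ lam i < u}) : ℕ)
          = (L * Δ ^ 2 / 2) * ((N:ℝ) + k + 1) ^ (-p) := by
        intro k
        rw [pds_equiv_coe _ N hmem k, hw _ (by omega),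
          show ((N + 1 + k : ℕ) : ℝ) = (N:ℝ) + k + 1 by push_cast; ring]
      rw [tsum_congr hterm, tsum_mul_left]
    have hA : (0:ℝ) < (γ * L) ^ ω := Real.rpow_pos_of_pos hγL0 _
    have hu_eq : u = γ * L * (t u) ^ (-α) := by
      rw [Real.rpow_neg htu0.le, htα]
      field_simp
    have huω : u ^ ω = (γ * L) ^ ω * (t u) ^ (1 - p) := by
      conv_lhs => rw [hu_eq]
      rw [Real.mul_rpow hγL0.le (Real.rpow_nonneg htu0.le _), ← Real.rpow_mul htu0.le,
        show -α * ω = 1 - p from by linarith [hαω]]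
    have hT0 : (0:ℝ) < (t u) ^ (1 - p) := Real.rpow_pos_of_pos htu0 _
    have hden : (c / ω) * u ^ ω = (L * Δ ^ 2) / (2 * (p - 1)) * (t u) ^ (1 - p) := by
      rw [huω, hc]
      rw [show (2:ℝ) * (p - 1) = 2 * (α * ω) from by rw [hαω]]
      field_simp
    obtain ⟨hsum, hSlb, hSub⟩ := pds_tail_bounds hp hNr
    have hratio : (∑' i : {i : ℕ // 1 ≤ i ∧ lam i < u}, w i) / ((c / ω) * u ^ ω)
        = (p - 1) * (∑' k : ℕ, ((N:ℝ) + k + 1) ^ (-p)) / (t u) ^ (1 - p) := by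
      rw [hσ, hden]
      have hLΔ : L * Δ ^ 2 ≠ 0 := by positivity
      field_simp
    rw [hratio]
    constructor
    · rw [Real.div_rpow (by positivity) htu0.le]
      have hnum : ((N:ℝ) + 1) ^ (1 - p) ≤ (p - 1) * (∑' k : ℕ, ((N:ℝ) + k + 1) ^ (-p)) := by
        have := (div_le_iff₀ hp1).1 hSlb
        linarith [this]
      gcongr
    · rw [Real.div_rpow (Nat.cast_nonneg N) htu0.le]
      have hnum : (p - 1) * (∑' k : ℕ, ((N:ℝ) + k + 1) ^ (-p)) ≤ (N:ℝ) ^ (1 - p) := by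
        have h := (le_div_iff₀ hp1).1 hSub
        nlinarith [h]
      gcongr
  refine tendsto_of_tendsto_of_tendsto_of_le_of_le' hlo hhi ?_ ?_
  · filter_upwards [Ioo_mem_nhdsGT_of_mem (Set.mem_Ico.2 ⟨le_refl (0:ℝ), hγL0⟩)] with u hu
    exact (key u hu).1
  · filter_upwards [Ioo_mem_nhdsGT_of_mem (Set.mem_Ico.2 ⟨le_refl (0:ℝ), hγL0⟩)] with u hu
    exact (key u hu).2
end

section
/- Let (λ_i)_{i≥1} be a sequence in (0,1], (w_i)_{i≥1} nonnegative reals with W := Σ_{i=1}^∞ w_i < ∞, and suppose the spectral measure σ(0,u) := Σ_{i : λ_i < u} w_i satisfies σ(0,u) ≤ M·u^ω for all u ∈ (0, u_0), for some constants M > 0, ω > 0, u_0 ∈ (0,1). Then for all k with (ω·log k)/(2k) < u_0 and k ≥ e, the excess loss satisfies the explicit non-asymptotic bound F(k) := Σ_{i=1}^∞ w_i (1 − λ_i)^{2k} ≤ M·((ω·log k)/(2k))^ω + W·k^{−ω}, obtained by splitting at u = (ω·log k)/(2k). -/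
/-- **non-asymptotic infinite-dimensional scaling law.** For eigenvalues
`λ i ∈ (0,1]` and summable nonnegative weights `w i` with total mass `W = ∑' i, w i`,
if the spectral measure satisfies `σ(0,u) = ∑_{i : λ i < u} w i ≤ M·u^ω` for all
`u ∈ (0, u₀)`, then for all `k` with `(ω·log k)/(2k) < u₀` and `k ≥ e`, splitting at
`u = (ω·log k)/(2k)` gives
`F(k) = ∑' i, w i (1 - λ i)^(2k) ≤ M·((ω·log k)/(2k))^ω + W·k^(-ω)`. -/
theorem nonasymptotic_scaling_bound
    (lam w : ℕ → ℝ)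
    (hlam : ∀ i, lam i ∈ Set.Ioc (0 : ℝ) 1)
    (hw : ∀ i, 0 ≤ w i) (hsum : Summable w)
    (M ω u₀ : ℝ) (hM : 0 < M) (hω : 0 < ω) (hu₀ : u₀ ∈ Set.Ioo (0 : ℝ) 1)
    (hσ : ∀ u ∈ Set.Ioo (0 : ℝ) u₀,
      (∑' i : {i : ℕ // lam i < u}, w i) ≤ M * u ^ ω) :
    ∀ k : ℕ, (ω * Real.log k) / (2 * k) < u₀ → Real.exp 1 ≤ (k : ℝ) →
      (∑' i : ℕ, w i * (1 - lam i) ^ (2 * k)) ≤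
        M * ((ω * Real.log k) / (2 * k)) ^ ω + (∑' i : ℕ, w i) * (k : ℝ) ^ (-ω) := by
  intro k hku he
  have hk1 : (1 : ℝ) < (k : ℝ) := lt_of_lt_of_le (by
    have := Real.exp_pos 1
    nlinarith [Real.add_one_le_exp (1 : ℝ)]) he
  have hk0 : (0 : ℝ) < (k : ℝ) := by linarith
  have hlogk : (1 : ℝ) ≤ Real.log k := by
    have := Real.log_le_log (Real.exp_pos 1) he
    simpa [Real.log_exp] using this
  set u : ℝ := (ω * Real.log k) / (2 * k) with hu
  have hupos : 0 < u := by
    apply div_pos (by nlinarith) (by linarith)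
  have hu1 : u < 1 := lt_trans hku hu₀.2
  -- bounds on terms
  have hterm_nonneg : ∀ i, 0 ≤ w i * (1 - lam i) ^ (2 * k) := fun i =>
    mul_nonneg (hw i) (pow_nonneg (by linarith [(hlam i).2]) _)
  have hterm_le_w : ∀ i, w i * (1 - lam i) ^ (2 * k) ≤ w i := by
    intro i
    have h1 : (1 - lam i) ^ (2 * k) ≤ 1 :=
      pow_le_one₀ (by linarith [(hlam i).2]) (by linarith [(hlam i).1])
    nlinarith [hw i]
  have hfsum : Summable (fun i => w i * (1 - lam i) ^ (2 * k)) :=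
    hsum.of_nonneg_of_le hterm_nonneg hterm_le_w
  -- split
  set s : Set ℕ := {i | lam i < u} with hs
  have hsplit := Summable.tsum_add_tsum_compl (f := fun i => w i * (1 - lam i) ^ (2 * k))
    (s := s) (hfsum.subtype s) (hfsum.subtype sᶜ)
  rw [← hsplit]
  have hA : (∑' i : s, w i * (1 - lam i) ^ (2 * k)) ≤ M * u ^ ω := by
    calc (∑' i : s, w i * (1 - lam i) ^ (2 * k)) ≤ ∑' i : s, w i := by
          exact Summable.tsum_le_tsum (fun i : ↥s => hterm_le_w i) (hfsum.subtype s) (hsum.subtype s)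
      _ ≤ M * u ^ ω := hσ u ⟨hupos, hku⟩
  have hB : (∑' i : ↥sᶜ, w i * (1 - lam i) ^ (2 * k)) ≤ (∑' i : ℕ, w i) * (k : ℝ) ^ (-ω) := by
    have hkpow : Real.exp (-(2 * k * u)) = (k : ℝ) ^ (-ω) := by
      rw [Real.rpow_def_of_pos hk0]
      congr 1
      rw [hu]; field_simp
    have hle : ∀ i : ↥sᶜ, w i * (1 - lam i) ^ (2 * k) ≤ w i * (k : ℝ) ^ (-ω) := by
      rintro ⟨i, hi⟩
      have hiu : u ≤ lam i := le_of_not_gt hi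
      have h1 : (1 - lam i) ^ (2 * k) ≤ (1 - u) ^ (2 * k) :=
        pow_le_pow_left₀ (by linarith [(hlam i).2]) (by linarith) _
      have h2 : (1 - u) ^ (2 * k) ≤ Real.exp (-u) ^ (2 * k) :=
        pow_le_pow_left₀ (by linarith) (by linarith [Real.add_one_le_exp (-u)]) _
      have h3 : Real.exp (-u) ^ (2 * k) = Real.exp (-(2 * k * u)) := by
        rw [← Real.exp_nat_mul]; congr 1; push_cast; ring
      have : (1 - lam i) ^ (2 * k) ≤ (k : ℝ) ^ (-ω) := by
        rw [← hkpow, ← h3]; exact le_trans h1 h2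
      exact mul_le_mul_of_nonneg_left this (hw i)
    calc (∑' i : ↥sᶜ, w i * (1 - lam i) ^ (2 * k))
        ≤ ∑' i : ↥sᶜ, w i * (k : ℝ) ^ (-ω) :=
          Summable.tsum_le_tsum hle (hfsum.subtype _) ((hsum.mul_right _).subtype _)
      _ = (∑' i : ↥sᶜ, w i) * (k : ℝ) ^ (-ω) := by rw [tsum_mul_right]
      _ ≤ (∑' i : ℕ, w i) * (k : ℝ) ^ (-ω) := by
          apply mul_le_mul_of_nonneg_right _ (Real.rpow_nonneg hk0.le _)
          exact Summable.tsum_le_tsum_of_inj Subtype.val Subtype.val_injective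
            (fun c _ => hw c) (fun b => le_rfl) (hsum.subtype _) hsum
  linarith
end
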